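/- Let f be smooth on an open U ⊆ ℝ² with f_x, f_y nowhere zero, and set ω₁ = −f_x dx, ω₂ = −f_y dy, ω₃ = df, and γ = −H·ω₃ where H = f_{xy}/(f_x f_y). Then the structure equations dω₁ = ω₁ ∧ γ and dω₂ = ω₂ ∧ γ hold. -/

import Mathlib

noncomputable def px (f : ℝ × ℝ → ℝ) (z : ℝ × ℝ) : ℝ := fderiv ℝ f z (1, 0)
noncomputable def py (f : ℝ × ℝ → ℝ) (z : ℝ × ℝ) : ℝ := fderiv ℝ f z (0, 1)

/-- `H = f_{xy}/(f_x f_y)`. -/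
noncomputable def Hfun (f : ℝ × ℝ → ℝ) (z : ℝ × ℝ) : ℝ :=
  px (py f) z / (px f z * py f z)

noncomputable def w1 (f : ℝ × ℝ → ℝ) (z : ℝ × ℝ) : ℝ × ℝ := (-(px f z), 0)
noncomputable def w2 (f : ℝ × ℝ → ℝ) (z : ℝ × ℝ) : ℝ × ℝ := (0, -(py f z))
noncomputable def w3 (f : ℝ × ℝ → ℝ) (z : ℝ × ℝ) : ℝ × ℝ := (px f z, py f z)

/-- `γ = -H ω₃`. -/
noncomputable def gam (f : ℝ × ℝ → ℝ) (z : ℝ × ℝ) : ℝ × ℝ :=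
  (-(Hfun f z) * px f z, -(Hfun f z) * py f z)

/-- Coefficient of `dx ∧ dy` in the exterior differential of a 1-form. -/
noncomputable def curl (ω : ℝ × ℝ → ℝ × ℝ) (z : ℝ × ℝ) : ℝ :=
  px (fun w => (ω w).2) z - py (fun w => (ω w).1) z

def wedge (a b : ℝ × ℝ) : ℝ := a.1 * b.2 - a.2 * b.1

lemma aux_second (f : ℝ × ℝ → ℝ) (z : ℝ × ℝ) (hfz : ContDiffAt ℝ (⊤ : ℕ∞) f z)
    (v u : ℝ × ℝ) :
    fderiv ℝ (fun w => fderiv ℝ f w v) z u = fderiv ℝ (fderiv ℝ f) z u v := by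
  have hdf : DifferentiableAt ℝ (fderiv ℝ f) z := by
    have : ContDiffAt ℝ 1 (fderiv ℝ f) z :=
      hfz.fderiv_right (by exact WithTop.coe_le_coe.2 le_top)
    exact this.differentiableAt one_ne_zero
  rw [fderiv_clm_apply hdf (differentiableAt_const v)]
  simp

lemma aux_key (f : ℝ × ℝ → ℝ) (z : ℝ × ℝ) (hfz : ContDiffAt ℝ (⊤ : ℕ∞) f z) :
    py (px f) z = px (py f) z := by
  have hsym := (hfz.isSymmSndFDerivAt (by rw [minSmoothness_of_isRCLikeNormedField]; exact WithTop.coe_le_coe.2 le_top))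
    ((0:ℝ), (1:ℝ)) ((1:ℝ), (0:ℝ))
  show fderiv ℝ (fun w => fderiv ℝ f w (1, 0)) z (0, 1)
      = fderiv ℝ (fun w => fderiv ℝ f w (0, 1)) z (1, 0)
  rw [aux_second f z hfz, aux_second f z hfz]
  exact hsym

/-- first structure equations `dω₁ = ω₁ ∧ γ`, `dω₂ = ω₂ ∧ γ`. -/
theorem stmt_3 (U : Set (ℝ × ℝ)) (hU : IsOpen U) (f : ℝ × ℝ → ℝ)
    (hf : ContDiffOn ℝ (⊤ : ℕ∞) f U)
    (hfx : ∀ z ∈ U, px f z ≠ 0) (hfy : ∀ z ∈ U, py f z ≠ 0) :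
    ∀ z ∈ U, curl (w1 f) z = wedge (w1 f z) (gam f z) ∧
      curl (w2 f) z = wedge (w2 f z) (gam f z) := by
  intro z hz
  have hfz : ContDiffAt ℝ (⊤ : ℕ∞) f z := hf.contDiffAt (hU.mem_nhds hz)
  have hx := hfx z hz
  have hy := hfy z hz
  have key := aux_key f z hfz
  have e1 : curl (w1 f) z = py (px f) z := by
    have h0 : (fun w => (w1 f w).2) = fun _ => (0:ℝ) := rfl
    have h1 : (fun w => (w1 f w).1) = fun w => -(px f w) := rfl
    simp only [curl, h0, h1]
    rw [show px (fun _ => (0:ℝ)) z = 0 by simp [px],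
        show py (fun w => -(px f w)) z = -(py (px f) z) by simp [py, fderiv_neg]]
    ring
  have e2 : curl (w2 f) z = -(px (py f) z) := by
    have h0 : (fun w => (w2 f w).2) = fun w => -(py f w) := rfl
    have h1 : (fun w => (w2 f w).1) = fun _ => (0:ℝ) := rfl
    simp only [curl, h0, h1]
    rw [show py (fun _ => (0:ℝ)) z = 0 by simp [py],
        show px (fun w => -(py f w)) z = -(px (py f) z) by simp [px, fderiv_neg]]
    ring
  constructor
  · rw [e1, key]
    simp only [wedge, gam, w1, Hfun]
    field_simp
    ring
  · rw [e2]
    simp only [wedge, gam, w2, Hfun]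
    field_simp
    ring
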